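/- Let (G,Γ₁,Γ₂) be a boundary triple for S. For a self-adjoint linear relation Λ on G, let H^Λ denote the restriction of S* to {φ ∈ dom S* : (Γ₁φ, Γ₂φ) ∈ Λ}. Then the map Λ ↦ H^Λ is a bijection between the self-adjoint linear relations on G and the self-adjoint extensions of S: for every self-adjoint linear relation Λ the operator H^Λ is a self-adjoint extension of S, and every self-adjoint extension of S equals H^Λ for exactly one self-adjoint linear relation Λ. -/

import Mathlib

open ContinuousLinearMap

variable {H : Type*} [NormedAddCommGroup H] [InnerProductSpace ℂ H] [CompleteSpace H]
variable {G : Type*} [NormedAddCommGroup G] [InnerProductSpace ℂ G] [CompleteSpace G]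

/-- The operator `M^{A,B}` on `G × G`, `(x₁,x₂) ↦ (A x₁ - B x₂, B x₁ + A x₂)`. -/
noncomputable def MAB (A B : G →L[ℂ] G) : (G × G) →L[ℂ] (G × G) :=
  ((A.comp (fst ℂ G G)) - (B.comp (snd ℂ G G))).prod
    ((B.comp (fst ℂ G G)) + (A.comp (snd ℂ G G)))

/-- A bounded operator is boundedly invertible if it has a bounded two-sided inverse. -/
def IsBoundedlyInvertible {E F : Type*} [NormedAddCommGroup E] [NormedSpace ℂ E]
    [NormedAddCommGroup F] [NormedSpace ℂ F] (T : E →L[ℂ] F) : Prop :=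
  ∃ T' : F →L[ℂ] E, (∀ x, T' (T x) = x) ∧ (∀ y, T (T' y) = y)

/-- A densely defined operator is symmetric if `⟪Sφ, ψ⟫ = ⟪φ, Sψ⟫` on its domain. -/
def IsSymmetricPMap (S : H →ₗ.[ℂ] H) : Prop :=
  ∀ φ ψ : S.domain, (inner ℂ (S φ) (ψ : H) : ℂ) = inner ℂ (φ : H) (S ψ)

/-- A boundary triple `(G, Γ₁, Γ₂)` for a symmetric operator `S`: two boundary maps
on `dom S*` satisfying the abstract Green identity and joint surjectivity. -/
structure BoundaryTriple (S : H →ₗ.[ℂ] H) (G : Type*) [NormedAddCommGroup G]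
    [InnerProductSpace ℂ G] [CompleteSpace G] where
  Γ₁ : S.adjoint.domain →ₗ[ℂ] G
  Γ₂ : S.adjoint.domain →ₗ[ℂ] G
  green : ∀ φ ψ : S.adjoint.domain,
    (inner ℂ (φ : H) (S.adjoint ψ) : ℂ) - inner ℂ (S.adjoint φ) (ψ : H)
      = (inner ℂ (Γ₁ φ) (Γ₂ ψ) : ℂ) - inner ℂ (Γ₂ φ) (Γ₁ ψ)
  surj : Function.Surjective fun φ : S.adjoint.domain => (Γ₁ φ, Γ₂ φ)

/-- The restriction of a partially defined operator `T` to a submodule `K` of its domain. -/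
noncomputable def pmapRestrict (T : H →ₗ.[ℂ] H) (K : Submodule ℂ T.domain) : H →ₗ.[ℂ] H where
  domain := K.map T.domain.subtype
  toFun := (T.toFun.comp K.subtype).comp
    (Submodule.equivMapOfInjective T.domain.subtype
      (Submodule.injective_subtype T.domain) K).symm.toLinearMap

/-- The distinguished extension `H⁰`: the restriction of `S*` to `ker Γ₁`. -/
noncomputable def H0 (S : H →ₗ.[ℂ] H) (BT : BoundaryTriple S G) : H →ₗ.[ℂ] H :=
  pmapRestrict S.adjoint (LinearMap.ker BT.Γ₁)

/-- The extension `H^{A,B}`: the restriction of `S*` to `{φ : A Γ₁ φ = B Γ₂ φ}`. -/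
noncomputable def HAB (S : H →ₗ.[ℂ] H) (BT : BoundaryTriple S G) (A B : G →L[ℂ] G) :
    H →ₗ.[ℂ] H :=
  pmapRestrict S.adjoint
    (LinearMap.ker ((A.toLinearMap.comp BT.Γ₁) - (B.toLinearMap.comp BT.Γ₂)))

/-- `R` is the resolvent of `T` at `z`: a bounded, everywhere defined two-sided inverse
of `T - z`. -/
def IsResolventOf (T : H →ₗ.[ℂ] H) (z : ℂ) (R : H →L[ℂ] H) : Prop :=
  (∀ f : H, ∃ φ : T.domain, (φ : H) = R f ∧ T φ - z • (φ : H) = f) ∧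
  (∀ φ : T.domain, R (T φ - z • (φ : H)) = φ)

/-- `z` is in the resolvent set of `T`. -/
def InResolventSet (T : H →ₗ.[ℂ] H) (z : ℂ) : Prop := ∃ R, IsResolventOf T z R

/-- `γz` is the `Γ`-field at `z`: the inverse of `Γ₁` restricted to the deficiency
space `N_z = ker (S* - z)`. -/
def IsGammaField (S : H →ₗ.[ℂ] H) (BT : BoundaryTriple S G) (z : ℂ) (γz : G →L[ℂ] H) : Prop :=
  (∀ ξ : G, ∃ φ : S.adjoint.domain, (φ : H) = γz ξ ∧ S.adjoint φ = z • (φ : H) ∧ BT.Γ₁ φ = ξ) ∧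
  (∀ φ : S.adjoint.domain, S.adjoint φ = z • (φ : H) → γz (BT.Γ₁ φ) = (φ : H))

/-- `Qz` is the `Q`-function (Weyl function) at `z`: `Qz = Γ₂ ∘ γz`. -/
def IsQFunction (S : H →ₗ.[ℂ] H) (BT : BoundaryTriple S G) (z : ℂ)
    (γz : G →L[ℂ] H) (Qz : G →L[ℂ] G) : Prop :=
  IsGammaField S BT z γz ∧
    ∀ φ : S.adjoint.domain, S.adjoint φ = z • (φ : H) → Qz (BT.Γ₁ φ) = BT.Γ₂ φ

/-- The adjoint of a linear relation. -/
def relAdjoint (Λ : Submodule ℂ (G × G)) : Submodule ℂ (G × G) where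
  carrier := {p | ∀ q ∈ Λ, (inner ℂ p.1 q.2 : ℂ) = inner ℂ p.2 q.1}
  add_mem' := by
    intro a b ha hb q hq
    simp [inner_add_left, ha q hq, hb q hq]
  zero_mem' := by
    intro q hq; simp
  smul_mem' := by
    intro c p hp q hq
    simp [inner_smul_left, hp q hq]

/-- A linear relation is self-adjoint if it equals its adjoint. -/
def IsSelfAdjointRel (Λ : Submodule ℂ (G × G)) : Prop := relAdjoint Λ = Λ

/-- The extension `H^Λ`: the restriction of `S*` to `{φ : (Γ₁ φ, Γ₂ φ) ∈ Λ}`. -/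
noncomputable def HLam (S : H →ₗ.[ℂ] H) (BT : BoundaryTriple S G)
    (Λ : Submodule ℂ (G × G)) : H →ₗ.[ℂ] H :=
  pmapRestrict S.adjoint (Submodule.comap (BT.Γ₁.prod BT.Γ₂) Λ)

section Helpers

local notation "⟪" x ", " y "⟫" => @inner ℂ _ _ x y

lemma mem_pmapRestrict_domain {T : H →ₗ.[ℂ] H} {K : Submodule ℂ T.domain} {x : H} :
    x ∈ (pmapRestrict T K).domain ↔ ∃ φ : T.domain, φ ∈ K ∧ (φ : H) = x := by
  simp [pmapRestrict, Submodule.mem_map]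

lemma pmapRestrict_apply (T : H →ₗ.[ℂ] H) (K : Submodule ℂ T.domain)
    (x : (pmapRestrict T K).domain) (y : T.domain) (h : (x : H) = (y : H)) :
    pmapRestrict T K x = T y := by
  set e := Submodule.equivMapOfInjective T.domain.subtype
    (Submodule.injective_subtype T.domain) K with he
  have h1 : pmapRestrict T K x = T ((e.symm x : K) : T.domain) := rfl
  have h2 : (((e.symm x : K) : T.domain) : H) = (x : H) :=
    Submodule.map_equivMapOfInjective_symm_apply _ _ _ x
  rw [h1]
  congr 1
  exact Subtype.ext (h2.trans h)

lemma pmapRestrict_le (T : H →ₗ.[ℂ] H) (K : Submodule ℂ T.domain) :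
    pmapRestrict T K ≤ T :=
  ⟨Submodule.map_subtype_le _ _, fun x y h => pmapRestrict_apply T K x y h⟩

lemma adjoint_anti {T₁ T₂ : H →ₗ.[ℂ] H} (h : T₁ ≤ T₂) (h1 : Dense (T₁.domain : Set H)) :
    T₂.adjoint ≤ T₁.adjoint := by
  have h2 : Dense (T₂.domain : Set H) := h1.mono (SetLike.coe_subset_coe.mpr h.1)
  have hfa : T₁.IsFormalAdjoint T₂.adjoint := by
    intro x y
    obtain ⟨x₂, hx, hval⟩ := LinearPMap.exists_of_le h x
    rw [hval, hx]
    exact (LinearPMap.adjoint_isFormalAdjoint h2).symm x₂ y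
  exact hfa.le_adjoint h1

end Helpers


local notation "⟪" x ", " y "⟫" => @inner ℂ _ _ x y

/-- **Statement 18b.** -/
theorem selfadjoint_extensions_bijection' (S : H →ₗ.[ℂ] H)
    (hdense : Dense (S.domain : Set H)) (hclosed : S.IsClosed) (hsymm : IsSymmetricPMap S)
    (BT : BoundaryTriple S G) :
    (∀ Λ : Submodule ℂ (G × G), IsSelfAdjointRel Λ →
        S ≤ HLam S BT Λ ∧ _root_.IsSelfAdjoint (HLam S BT Λ)) ∧
    (∀ T : H →ₗ.[ℂ] H, S ≤ T → _root_.IsSelfAdjoint T →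
        ∃! Λ : Submodule ℂ (G × G), IsSelfAdjointRel Λ ∧ HLam S BT Λ = T) := by
  classical
  have hSA : S ≤ S.adjoint :=
    LinearPMap.IsFormalAdjoint.le_adjoint hdense (hsymm : S.IsFormalAdjoint S)
  have hdA : Dense ((S.adjoint.domain : Submodule ℂ H) : Set H) :=
    hdense.mono (SetLike.coe_subset_coe.mpr hSA.1)
  -- membership in the domain of `HLam`
  have hmemHLam : ∀ (Λ : Submodule ℂ (G × G)) (x : H),
      x ∈ (HLam S BT Λ).domain ↔
        ∃ φ : S.adjoint.domain, (BT.Γ₁ φ, BT.Γ₂ φ) ∈ Λ ∧ (φ : H) = x := by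
    intro Λ x
    exact mem_pmapRestrict_domain
  -- the boundary maps vanish on `dom S`
  have hGamma0 : ∀ φ : S.adjoint.domain, (φ : H) ∈ S.domain →
      BT.Γ₁ φ = 0 ∧ BT.Γ₂ φ = 0 := by
    intro φ hφ
    have hval : S ⟨(φ : H), hφ⟩ = S.adjoint φ := hSA.2 rfl
    have key : ∀ ψ : S.adjoint.domain, ⟪BT.Γ₁ φ, BT.Γ₂ ψ⟫ = ⟪BT.Γ₂ φ, BT.Γ₁ ψ⟫ := by
      intro ψ
      have hg := BT.green φ ψ
      have h1 : ⟪(φ : H), S.adjoint ψ⟫ = ⟪S.adjoint φ, (ψ : H)⟫ := by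
        have h2 := LinearPMap.adjoint_isFormalAdjoint hdense ψ ⟨(φ : H), hφ⟩
        calc ⟪(φ : H), S.adjoint ψ⟫
            = starRingEnd ℂ ⟪S.adjoint ψ, (φ : H)⟫ := (inner_conj_symm _ _).symm
          _ = starRingEnd ℂ ⟪(ψ : H), S ⟨(φ : H), hφ⟩⟫ := by rw [h2]
          _ = ⟪S ⟨(φ : H), hφ⟩, (ψ : H)⟫ := inner_conj_symm _ _
          _ = ⟪S.adjoint φ, (ψ : H)⟫ := by rw [hval]
      rw [h1, sub_self] at hg
      exact sub_eq_zero.mp hg.symm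
    obtain ⟨ψ, hψ⟩ := BT.surj (-(BT.Γ₂ φ), BT.Γ₁ φ)
    have hψ1 : BT.Γ₁ ψ = -(BT.Γ₂ φ) := by simpa using congrArg Prod.fst hψ
    have hψ2 : BT.Γ₂ ψ = BT.Γ₁ φ := by simpa using congrArg Prod.snd hψ
    have h3 := key ψ
    rw [hψ1, hψ2, inner_neg_right] at h3
    have h5 : (‖BT.Γ₁ φ‖ : ℝ) ^ 2 = -(‖BT.Γ₂ φ‖ : ℝ) ^ 2 := by
      have e1 := inner_self_eq_norm_sq_to_K (𝕜 := ℂ) (BT.Γ₁ φ)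
      have e2 := inner_self_eq_norm_sq_to_K (𝕜 := ℂ) (BT.Γ₂ φ)
      rw [e1, e2] at h3
      exact_mod_cast h3
    constructor
    · rw [← norm_eq_zero]
      nlinarith [sq_nonneg ‖BT.Γ₁ φ‖, sq_nonneg ‖BT.Γ₂ φ‖, norm_nonneg (BT.Γ₁ φ),
        norm_nonneg (BT.Γ₂ φ)]
    · rw [← norm_eq_zero]
      nlinarith [sq_nonneg ‖BT.Γ₁ φ‖, sq_nonneg ‖BT.Γ₂ φ‖, norm_nonneg (BT.Γ₁ φ),
        norm_nonneg (BT.Γ₂ φ)]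
  ----------------------------------------------------------------
  -- Part 1
  ----------------------------------------------------------------
  have hpart1 : ∀ Λ : Submodule ℂ (G × G), IsSelfAdjointRel Λ →
      S ≤ HLam S BT Λ ∧ _root_.IsSelfAdjoint (HLam S BT Λ) := by
    intro Λ hΛ
    have hle : S ≤ HLam S BT Λ := by
      constructor
      · intro x hx
        refine (hmemHLam Λ x).mpr ⟨⟨x, hSA.1 hx⟩, ?_, rfl⟩
        obtain ⟨h1, h2⟩ := hGamma0 ⟨x, hSA.1 hx⟩ hx
        rw [h1, h2]
        exact Λ.zero_mem
      · intro x y hxy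
        obtain ⟨φ, hφΛ, hφx⟩ := (hmemHLam Λ (y : H)).mp y.2
        have h1 : HLam S BT Λ y = S.adjoint φ := pmapRestrict_apply _ _ y φ hφx.symm
        rw [h1]
        exact hSA.2 (by rw [hxy, ← hφx])
    have hdΛ : Dense (((HLam S BT Λ).domain : Submodule ℂ H) : Set H) :=
      hdense.mono (SetLike.coe_subset_coe.mpr hle.1)
    have hsymmΛ : (HLam S BT Λ).IsFormalAdjoint (HLam S BT Λ) := by
      intro x y
      obtain ⟨φ, hφΛ, hφx⟩ := (hmemHLam Λ (x : H)).mp x.2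
      obtain ⟨ψ, hψΛ, hψy⟩ := (hmemHLam Λ (y : H)).mp y.2
      have hx1 : HLam S BT Λ x = S.adjoint φ := pmapRestrict_apply _ _ x φ hφx.symm
      have hy1 : HLam S BT Λ y = S.adjoint ψ := pmapRestrict_apply _ _ y ψ hψy.symm
      have hg := BT.green φ ψ
      have hrel : ⟪BT.Γ₁ φ, BT.Γ₂ ψ⟫ = ⟪BT.Γ₂ φ, BT.Γ₁ ψ⟫ := by
        have hmem : (BT.Γ₁ φ, BT.Γ₂ φ) ∈ relAdjoint Λ := by rw [hΛ]; exact hφΛ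
        exact hmem _ hψΛ
      rw [hrel, sub_self] at hg
      have h0 : ⟪(φ : H), S.adjoint ψ⟫ = ⟪S.adjoint φ, (ψ : H)⟫ := sub_eq_zero.mp hg
      rw [hx1, hy1, ← hφx, ← hψy]
      exact h0.symm
    have hsaΛ : _root_.IsSelfAdjoint (HLam S BT Λ) := by
      rw [LinearPMap.isSelfAdjoint_def]
      have hanti : (HLam S BT Λ).adjoint ≤ S.adjoint := adjoint_anti hle hdense
      apply le_antisymm
      · constructor
        · intro x hx
          have hxA : x ∈ S.adjoint.domain := hanti.1 hx
          have hvalφ : (HLam S BT Λ).adjoint ⟨x, hx⟩ = S.adjoint ⟨x, hxA⟩ := hanti.2 rfl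
          refine (hmemHLam Λ x).mpr ⟨⟨x, hxA⟩, ?_, rfl⟩
          rw [← hΛ]
          show ∀ q ∈ Λ, ⟪BT.Γ₁ ⟨x, hxA⟩, q.2⟫ = ⟪BT.Γ₂ ⟨x, hxA⟩, q.1⟫
          intro q hq
          obtain ⟨ψ, hψ⟩ := BT.surj q
          have hψq : (BT.Γ₁ ψ, BT.Γ₂ ψ) = q := hψ
          have hψΛ : (BT.Γ₁ ψ, BT.Γ₂ ψ) ∈ Λ := by rw [hψq]; exact hq
          have hyD : (ψ : H) ∈ (HLam S BT Λ).domain := (hmemHLam Λ _).mpr ⟨ψ, hψΛ, rfl⟩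
          have e2 : HLam S BT Λ ⟨(ψ : H), hyD⟩ = S.adjoint ψ :=
            pmapRestrict_apply _ _ ⟨(ψ : H), hyD⟩ ψ rfl
          have e1 : ⟪S.adjoint ⟨x, hxA⟩, (ψ : H)⟫ = ⟪x, S.adjoint ψ⟫ := by
            have h0 := LinearPMap.adjoint_isFormalAdjoint hdΛ
              (⟨x, hx⟩ : (HLam S BT Λ).adjoint.domain) ⟨(ψ : H), hyD⟩
            rw [hvalφ, e2] at h0
            exact h0
          have hg : (⟪x, S.adjoint ψ⟫ - ⟪S.adjoint ⟨x, hxA⟩, (ψ : H)⟫ : ℂ)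
              = ⟪BT.Γ₁ ⟨x, hxA⟩, BT.Γ₂ ψ⟫ - ⟪BT.Γ₂ ⟨x, hxA⟩, BT.Γ₁ ψ⟫ := BT.green ⟨x, hxA⟩ ψ
          rw [← e1, sub_self] at hg
          have h5 : ⟪BT.Γ₁ ⟨x, hxA⟩, BT.Γ₂ ψ⟫ = ⟪BT.Γ₂ ⟨x, hxA⟩, BT.Γ₁ ψ⟫ :=
            sub_eq_zero.mp hg.symm
          have hq1 : BT.Γ₁ ψ = q.1 := by rw [← hψq]
          have hq2 : BT.Γ₂ ψ = q.2 := by rw [← hψq]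
          rw [hq1, hq2] at h5
          exact h5
        · intro x y hxy
          have hxA : (x : H) ∈ S.adjoint.domain := hanti.1 x.2
          have h1 : (HLam S BT Λ).adjoint x = S.adjoint ⟨(x : H), hxA⟩ := hanti.2 rfl
          have h2 : HLam S BT Λ y = S.adjoint ⟨(x : H), hxA⟩ :=
            pmapRestrict_apply _ _ y ⟨(x : H), hxA⟩ hxy.symm
          rw [h1, h2]
      · exact hsymmΛ.le_adjoint hdΛ
    exact ⟨hle, hsaΛ⟩
  refine ⟨hpart1, ?_⟩
  ----------------------------------------------------------------
  -- Part 2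
  ----------------------------------------------------------------
  intro T hST hsaT
  rw [LinearPMap.isSelfAdjoint_def] at hsaT
  have hdT : Dense ((T.domain : Submodule ℂ H) : Set H) :=
    hdense.mono (SetLike.coe_subset_coe.mpr hST.1)
  have hTA : T ≤ S.adjoint := by
    have h := adjoint_anti hST hdense
    rwa [hsaT] at h
  set K : Submodule ℂ S.adjoint.domain := Submodule.comap S.adjoint.domain.subtype T.domain
    with hKdef
  set Λ : Submodule ℂ (G × G) := Submodule.map (BT.Γ₁.prod BT.Γ₂) K with hΛdef
  have hTT : T ≤ T.adjoint := le_of_eq hsaT.symm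
  have hTsymm : ∀ x y : T.domain, ⟪T x, (y : H)⟫ = ⟪(x : H), T y⟫ := by
    intro x y
    obtain ⟨x', hx', hval⟩ := LinearPMap.exists_of_le hTT x
    rw [hval, hx']
    exact LinearPMap.adjoint_isFormalAdjoint hdT x' y
  -- elements of `ker Γ₁ ∩ ker Γ₂` belong to `dom T`
  have hker : ∀ χ : S.adjoint.domain, BT.Γ₁ χ = 0 → BT.Γ₂ χ = 0 →
      ∃ h : (χ : H) ∈ T.domain, T ⟨(χ : H), h⟩ = S.adjoint χ := by
    intro χ h1 h2
    have hAA : ∀ ψ : S.adjoint.domain, ⟪S.adjoint χ, (ψ : H)⟫ = ⟪(χ : H), S.adjoint ψ⟫ := by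
      intro ψ
      have hg := BT.green χ ψ
      rw [h1, h2, inner_zero_left, inner_zero_left, sub_self] at hg
      exact (sub_eq_zero.mp hg).symm
    have hmem : (χ : H) ∈ S.adjoint.adjoint.domain :=
      LinearPMap.mem_adjoint_domain_of_exists _ ⟨S.adjoint χ, hAA⟩
    have hAadj : S.adjoint.adjoint ≤ T := by
      have h := adjoint_anti hTA hdT
      rwa [hsaT] at h
    refine ⟨hAadj.1 hmem, ?_⟩
    have hv1 : S.adjoint.adjoint ⟨(χ : H), hmem⟩ = S.adjoint χ :=
      LinearPMap.adjoint_apply_eq hdA ⟨(χ : H), hmem⟩ hAA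
    have hv2 : S.adjoint.adjoint ⟨(χ : H), hmem⟩ = T ⟨(χ : H), hAadj.1 hmem⟩ := hAadj.2 rfl
    rw [← hv2, hv1]
  -- Λ is self-adjoint
  have hΛsa : IsSelfAdjointRel Λ := by
    refine le_antisymm ?_ ?_
    · rintro ⟨p1, p2⟩ hp
      obtain ⟨φ, hφ⟩ := BT.surj (p1, p2)
      have hφeq : (BT.Γ₁ φ, BT.Γ₂ φ) = (p1, p2) := hφ
      have hφ1 : BT.Γ₁ φ = p1 := congrArg Prod.fst hφeq
      have hφ2 : BT.Γ₂ φ = p2 := congrArg Prod.snd hφeq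
      have hTdom : (φ : H) ∈ T.adjoint.domain := by
        apply LinearPMap.mem_adjoint_domain_of_exists
        refine ⟨S.adjoint φ, ?_⟩
        intro ψ'
        have hψA : (ψ' : H) ∈ S.adjoint.domain := hTA.1 ψ'.2
        have hval : T ψ' = S.adjoint ⟨(ψ' : H), hψA⟩ := hTA.2 rfl
        have hg : (⟪(φ : H), S.adjoint ⟨(ψ' : H), hψA⟩⟫
              - ⟪S.adjoint φ, (ψ' : H)⟫ : ℂ)
            = ⟪BT.Γ₁ φ, BT.Γ₂ ⟨(ψ' : H), hψA⟩⟫ - ⟪BT.Γ₂ φ, BT.Γ₁ ⟨(ψ' : H), hψA⟩⟫ :=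
          BT.green φ ⟨(ψ' : H), hψA⟩
        have hq : (BT.Γ₁ ⟨(ψ' : H), hψA⟩, BT.Γ₂ ⟨(ψ' : H), hψA⟩) ∈ Λ :=
          Submodule.mem_map_of_mem (show (⟨(ψ' : H), hψA⟩ : S.adjoint.domain) ∈ K from ψ'.2)
        have h0 : ⟪p1, BT.Γ₂ ⟨(ψ' : H), hψA⟩⟫ = ⟪p2, BT.Γ₁ ⟨(ψ' : H), hψA⟩⟫ := hp _ hq
        rw [hφ1, hφ2, h0, sub_self] at hg
        rw [hval]
        exact (sub_eq_zero.mp hg).symm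
      rw [hsaT] at hTdom
      have hmm : (BT.Γ₁.prod BT.Γ₂) φ ∈ Λ :=
        Submodule.mem_map_of_mem (show φ ∈ K from hTdom)
      have h' : (BT.Γ₁.prod BT.Γ₂) φ = (p1, p2) := hφ
      exact h' ▸ hmm
    · rintro p hp
      show ∀ q ∈ Λ, ⟪p.1, q.2⟫ = ⟪p.2, q.1⟫
      intro q hq
      obtain ⟨φ, hφK, hφp⟩ := Submodule.mem_map.mp hp
      obtain ⟨ψ, hψK, hψq⟩ := Submodule.mem_map.mp hq
      rw [← hφp, ← hψq]
      show ⟪BT.Γ₁ φ, BT.Γ₂ ψ⟫ = ⟪BT.Γ₂ φ, BT.Γ₁ ψ⟫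
      have hvφ : T ⟨(φ : H), hφK⟩ = S.adjoint φ := hTA.2 rfl
      have hvψ : T ⟨(ψ : H), hψK⟩ = S.adjoint ψ := hTA.2 rfl
      have hsym := hTsymm ⟨(φ : H), hφK⟩ ⟨(ψ : H), hψK⟩
      rw [hvφ, hvψ] at hsym
      have hsym' : ⟪S.adjoint φ, (ψ : H)⟫ = ⟪(φ : H), S.adjoint ψ⟫ := hsym
      have hg := BT.green φ ψ
      rw [← hsym', sub_self] at hg
      exact sub_eq_zero.mp hg.symm
  -- HLam Λ = T
  have hHT : HLam S BT Λ = T := by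
    apply le_antisymm
    · constructor
      · intro x hx
        obtain ⟨φ, hφΛ, hφx⟩ := (hmemHLam Λ x).mp hx
        obtain ⟨ψ, hψK, hψeq⟩ := Submodule.mem_map.mp hφΛ
        have h1 : BT.Γ₁ (φ - ψ) = 0 := by
          have := congrArg Prod.fst hψeq
          simp only [LinearMap.prod_apply, Pi.prod] at this
          rw [map_sub, this.symm]
          simp
        have h2 : BT.Γ₂ (φ - ψ) = 0 := by
          have := congrArg Prod.snd hψeq
          simp only [LinearMap.prod_apply, Pi.prod] at this
          rw [map_sub, this.symm]
          simp
        obtain ⟨hmem, -⟩ := hker (φ - ψ) h1 h2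
        have hx' : x = ((φ - ψ : S.adjoint.domain) : H) + (ψ : H) := by
          rw [← hφx]
          push_cast
          abel
        rw [hx']
        exact T.domain.add_mem hmem hψK
      · intro x y hxy
        obtain ⟨φ, hφΛ, hφx⟩ := (hmemHLam Λ (x : H)).mp x.2
        obtain ⟨ψ, hψK, hψeq⟩ := Submodule.mem_map.mp hφΛ
        have h1 : BT.Γ₁ (φ - ψ) = 0 := by
          have := congrArg Prod.fst hψeq
          simp only [LinearMap.prod_apply, Pi.prod] at this
          rw [map_sub, this.symm]
          simp
        have h2 : BT.Γ₂ (φ - ψ) = 0 := by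
          have := congrArg Prod.snd hψeq
          simp only [LinearMap.prod_apply, Pi.prod] at this
          rw [map_sub, this.symm]
          simp
        obtain ⟨hmem, hval⟩ := hker (φ - ψ) h1 h2
        have hx1 : HLam S BT Λ x = S.adjoint φ := pmapRestrict_apply _ _ x φ hφx.symm
        have hsplit : y = ⟨((φ - ψ : S.adjoint.domain) : H), hmem⟩ + ⟨(ψ : H), hψK⟩ := by
          apply Subtype.ext
          show (y : H) = ((φ - ψ : S.adjoint.domain) : H) + (ψ : H)
          rw [← hxy, ← hφx]
          push_cast
          abel
        have hvψ : T ⟨(ψ : H), hψK⟩ = S.adjoint ψ := hTA.2 rfl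
        rw [hx1, hsplit, T.map_add, hval, hvψ, ← S.adjoint.map_add]
        congr 1
        simp
    · constructor
      · intro x hx
        refine (hmemHLam Λ x).mpr ⟨⟨x, hTA.1 hx⟩, ?_, rfl⟩
        exact Submodule.mem_map_of_mem (show (⟨x, hTA.1 hx⟩ : S.adjoint.domain) ∈ K from hx)
      · intro x y hxy
        have h2 : HLam S BT Λ y = S.adjoint ⟨(x : H), hTA.1 x.2⟩ :=
          pmapRestrict_apply _ _ y ⟨(x : H), hTA.1 x.2⟩ hxy.symm
        rw [h2]
        exact hTA.2 rfl
  refine ⟨Λ, ⟨hΛsa, hHT⟩, ?_⟩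
  rintro Λ' ⟨hΛ'sa, hΛ'T⟩
  have hdomeq : (HLam S BT Λ').domain = T.domain := congrArg LinearPMap.domain hΛ'T
  apply le_antisymm
  · intro q hq
    obtain ⟨φ, hφ⟩ := BT.surj q
    have hφq : (BT.Γ₁ φ, BT.Γ₂ φ) = q := hφ
    have hmem : (φ : H) ∈ (HLam S BT Λ').domain :=
      (hmemHLam Λ' _).mpr ⟨φ, by rw [hφq]; exact hq, rfl⟩
    rw [hdomeq] at hmem
    have hφK : φ ∈ K := hmem
    have hmm := Submodule.mem_map_of_mem (f := BT.Γ₁.prod BT.Γ₂) hφK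
    have h' : (BT.Γ₁.prod BT.Γ₂) φ = q := hφ
    exact h' ▸ hmm
  · intro q hq
    obtain ⟨φ, hφK, hφq⟩ := Submodule.mem_map.mp hq
    have hmem : (φ : H) ∈ T.domain := hφK
    rw [← hdomeq] at hmem
    obtain ⟨ψ, hψΛ', hψeq⟩ := (hmemHLam Λ' _).mp hmem
    have hψφ : ψ = φ := Subtype.coe_injective hψeq
    rw [← hφq]
    show (BT.Γ₁ φ, BT.Γ₂ φ) ∈ Λ'
    rw [← hψφ]
    exact hψΛ'

/-- The map `Λ ↦ H^Λ` is a bijection between the self-adjoint linear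
relations on `G` and the self-adjoint extensions of `S`. -/
theorem selfadjoint_extensions_bijection (S : H →ₗ.[ℂ] H)
    (hdense : Dense (S.domain : Set H)) (hclosed : S.IsClosed) (hsymm : IsSymmetricPMap S)
    (BT : BoundaryTriple S G) :
    (∀ Λ : Submodule ℂ (G × G), IsSelfAdjointRel Λ →
        S ≤ HLam S BT Λ ∧ _root_.IsSelfAdjoint (HLam S BT Λ)) ∧
    (∀ T : H →ₗ.[ℂ] H, S ≤ T → _root_.IsSelfAdjoint T →
        ∃! Λ : Submodule ℂ (G × G), IsSelfAdjointRel Λ ∧ HLam S BT Λ = T) :=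
  selfadjoint_extensions_bijection' S hdense hclosed hsymm BT
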